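/- Theorem 1 (finite improvement property): the route selection game possesses the FIP, i.e., there is no infinite sequence of strategy profiles s^0, s^1, s^2, … such that for every step t there exists a single player m_t with s^{t+1} = (s'_{m_t}, s^t_{−m_t}) for some s'_{m_t} ∈ S_{m_t} and Ũ_{m_t}(s^{t+1}) > Ũ_{m_t}(s^t); equivalently, every path of unilateral strict payoff improvements is finite. -/
import Mathlib


open Finset

variable {ι V : Type*} [Fintype ι] [Nonempty ι] [DecidableEq ι] [Fintype V] [DecidableEq V]
variable {S : ι → Type*} [∀ m, Fintype (S m)] [∀ m, Nonempty (S m)]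

/-- The congestion `z_v(s)`: the number of players whose strategy uses vertex `v`. -/
def congestion (Vert : ∀ m : ι, S m → Finset V) (s : ∀ n, S n) (v : V) : ℕ :=
  (Finset.univ.filter fun n => v ∈ Vert n (s n)).card

/-- The reward part `Ũ^V_m(s)` of player `m`'s payoff. -/
def payoffV (Vert : ∀ m : ι, S m → Finset V) (ϱ : V → ℕ → ℝ) (m : ι) (s : ∀ n, S n) : ℝ :=
  ∑ v ∈ Vert m (s m), ϱ v (congestion Vert s v)

/-- Player `m`'s payoff `Ũ_m(s) = Σ_{v ∈ Vert(s_m)} ϱ_v(z_v(s)) − c_m(s_m)`. -/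
def payoff (Vert : ∀ m : ι, S m → Finset V) (ϱ : V → ℕ → ℝ) (c : ∀ m : ι, S m → ℝ)
    (m : ι) (s : ∀ n, S n) : ℝ :=
  payoffV Vert ϱ m s - c m (s m)

/-- The vertex part `Ψ^V(s) = Σ_{v ∈ V} Σ_{q=1}^{z_v(s)} ϱ_v(q)` of the potential. -/
def potentialV (Vert : ∀ m : ι, S m → Finset V) (ϱ : V → ℕ → ℝ) (s : ∀ n, S n) : ℝ :=
  ∑ v : V, ∑ q ∈ Finset.Icc 1 (congestion Vert s v), ϱ v q

/-- The potential `Ψ(s) = Σ_{v ∈ V} Σ_{q=1}^{z_v(s)} ϱ_v(q) − Σ_{n∈ι} c_n(s_n)`. -/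
def potential (Vert : ∀ m : ι, S m → Finset V) (ϱ : V → ℕ → ℝ) (c : ∀ m : ι, S m → ℝ)
    (s : ∀ n, S n) : ℝ :=
  potentialV Vert ϱ s - ∑ n : ι, c n (s n)

set_option linter.unusedSectionVars false in
lemma congestion_eq (Vert : ∀ m : ι, S m → Finset V) (s : ∀ n, S n) (m : ι) (v : V) :
    congestion Vert s v =
      ((Finset.univ.erase m).filter fun n => v ∈ Vert n (s n)).card
        + (if v ∈ Vert m (s m) then 1 else 0) := by
  classical
  unfold congestion
  conv_lhs => rw [← Finset.insert_erase (Finset.mem_univ m), Finset.filter_insert]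
  split_ifs with h
  · rw [Finset.card_insert_of_notMem (by simp)]
  · simp

lemma congestion_update (Vert : ∀ m : ι, S m → Finset V) (s : ∀ n, S n) (m : ι) (a : S m)
    (v : V) :
    congestion Vert (Function.update s m a) v =
      ((Finset.univ.erase m).filter fun n => v ∈ Vert n (s n)).card
        + (if v ∈ Vert m a then 1 else 0) := by
  classical
  rw [congestion_eq Vert _ m v, Function.update_self]
  congr 2
  apply Finset.filter_congr
  intro n hn
  rw [Function.update_of_ne (Finset.ne_of_mem_erase hn)]

lemma potential_diff (Vert : ∀ m : ι, S m → Finset V) (ϱ : V → ℕ → ℝ)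
    (c : ∀ m : ι, S m → ℝ) (s : ∀ n, S n) (m : ι) (a : S m) :
    potential Vert ϱ c (Function.update s m a) - potential Vert ϱ c s
      = payoff Vert ϱ c m (Function.update s m a) - payoff Vert ϱ c m s := by
  classical
  have hcost : (∑ n : ι, c n (Function.update s m a n)) - (∑ n : ι, c n (s n))
      = c m a - c m (s m) := by
    rw [← Finset.sum_erase_add univ _ (Finset.mem_univ m),
        ← Finset.sum_erase_add univ (fun n => c n (s n)) (Finset.mem_univ m)]
    have h : ∑ n ∈ univ.erase m, c n (Function.update s m a n)
        = ∑ n ∈ univ.erase m, c n (s n) :=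
      Finset.sum_congr rfl fun n hn => by
        rw [Function.update_of_ne (Finset.ne_of_mem_erase hn)]
    rw [h, Function.update_self]; ring
  have hV : potentialV Vert ϱ (Function.update s m a) - potentialV Vert ϱ s
      = payoffV Vert ϱ m (Function.update s m a) - payoffV Vert ϱ m s := by
    unfold potentialV payoffV
    rw [Function.update_self]
    rw [show (∑ v ∈ Vert m a, ϱ v (congestion Vert (Function.update s m a) v))
        = ∑ v : V, if v ∈ Vert m a then ϱ v (congestion Vert (Function.update s m a) v) else 0 by
      rw [Finset.sum_ite_mem, Finset.univ_inter]]
    rw [show (∑ v ∈ Vert m (s m), ϱ v (congestion Vert s v))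
        = ∑ v : V, if v ∈ Vert m (s m) then ϱ v (congestion Vert s v) else 0 by
      rw [Finset.sum_ite_mem, Finset.univ_inter]]
    rw [← Finset.sum_sub_distrib, ← Finset.sum_sub_distrib]
    apply Finset.sum_congr rfl
    intro v _
    rw [congestion_update Vert s m a v, congestion_eq Vert s m v]
    set k := ((Finset.univ.erase m).filter fun n => v ∈ Vert n (s n)).card with hk
    by_cases hA : v ∈ Vert m a <;> by_cases hB : v ∈ Vert m (s m) <;>
      simp only [hA, hB, if_true, if_false, add_zero]
    · ring
    · rw [Finset.sum_Icc_succ_top (Nat.le_add_left 1 k)]; ring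
    · rw [Finset.sum_Icc_succ_top (Nat.le_add_left 1 k)]; ring
    · ring
  unfold potential payoff
  rw [Function.update_self]
  have := hV
  linarith [hcost, hV]

/-- Theorem 1 (finite improvement property): there is no infinite sequence of strategy
profiles in which every step is a unilateral deviation that strictly increases the
deviating player's payoff. -/
theorem route_selection_game_FIP (Vert : ∀ m : ι, S m → Finset V)
    (ϱ : V → ℕ → ℝ) (c : ∀ m : ι, S m → ℝ) :
    ¬ ∃ seq : ℕ → ∀ n, S n, ∀ t : ℕ, ∃ (m : ι) (s' : S m),
      seq (t + 1) = Function.update (seq t) m s' ∧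
      payoff Vert ϱ c m (seq t) < payoff Vert ϱ c m (seq (t + 1)) := by
  rintro ⟨seq, h⟩
  have hmono : StrictMono fun t => potential Vert ϱ c (seq t) := by
    apply strictMono_nat_of_lt_succ
    intro t
    obtain ⟨m, s', heq, hlt⟩ := h t
    have hd := potential_diff Vert ϱ c (seq t) m s'
    rw [← heq] at hd
    linarith
  have hinj : Function.Injective seq := fun t1 t2 he => by
    have : potential Vert ϱ c (seq t1) = potential Vert ϱ c (seq t2) := by rw [he]
    exact hmono.injective this
  obtain ⟨t1, t2, hne, he⟩ := Finite.exists_ne_map_eq_of_infinite seq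
  exact hne (hinj he)
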